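/- Let r ≥ 1 and let d₁,…,d_r ≥ 1 be integers, set A = ℂ[x₁,…,x_r]/⟨x₁^{d₁},…,x_r^{d_r}⟩ and ρ = (d₁−1) + ⋯ + (d_r−1). Let f be a homogeneous polynomial of degree k and let i ≥ 0 be an integer with i + k ≤ ρ. Then the multiplication map ×f : A_i → A_{i+k} is injective if and only if the multiplication map ×f : A_{ρ−i−k} → A_{ρ−i} is surjective. -/

import Mathlib

open MvPolynomial

/-- The degree-`i` graded piece of the quotient algebra `R/I`, where
`R = ℂ[x₁,…,x_r]` is graded by total degree: the image of the space of
homogeneous polynomials of degree `i` under the quotient map. -/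
noncomputable def gradedPiece {r : ℕ} (I : Ideal (MvPolynomial (Fin r) ℂ)) (i : ℕ) :
    Submodule ℂ (MvPolynomial (Fin r) ℂ ⧸ I) :=
  (homogeneousSubmodule (Fin r) ℂ i).map (Ideal.Quotient.mkₐ ℂ I).toLinearMap

namespace CIDual

variable {r : ℕ}

lemma degF (α : Fin r →₀ ℕ) : α.degree = ∑ j, α j := by
  rw [Finsupp.degree]
  exact Finset.sum_subset (Finset.subset_univ _) (by
    intro j _ hj
    simpa using (Finsupp.notMem_support_iff.mp hj))

lemma homog_deg {p : MvPolynomial (Fin r) ℂ} {a : ℕ} (hp : p.IsHomogeneous a)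
    {α : Fin r →₀ ℕ} (h : coeff α p ≠ 0) : α.degree = a := by
  rw [Finsupp.degree_eq_weight_one]
  exact hp h

lemma mem_I_iff (d : Fin r → ℕ) (I : Ideal (MvPolynomial (Fin r) ℂ))
    (hI : I = Ideal.span (Set.range fun i => (X i : MvPolynomial (Fin r) ℂ) ^ d i))
    (p : MvPolynomial (Fin r) ℂ) :
    p ∈ I ↔ ∀ α ∈ p.support, ∃ j, d j ≤ α j := by
  have hset : (Set.range fun i => (X i : MvPolynomial (Fin r) ℂ) ^ d i) =
      (fun s => monomial s (1 : ℂ)) '' (Set.range fun j => Finsupp.single j (d j)) := by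
    rw [← Set.range_comp]
    exact congrArg Set.range (funext fun j => by simp [X_pow_eq_monomial])
  rw [hI, hset, mem_ideal_span_monomial_image]
  constructor
  · intro h α hα
    obtain ⟨s, ⟨j, rfl⟩, hs⟩ := h α hα
    exact ⟨j, by simpa using (Finsupp.single_le_iff.mp hs)⟩
  · intro h α hα
    obtain ⟨j, hj⟩ := h α hα
    exact ⟨Finsupp.single j (d j), ⟨j, rfl⟩, Finsupp.single_le_iff.mpr hj⟩

lemma mem_gradedPiece_iff (I : Ideal (MvPolynomial (Fin r) ℂ)) (a : ℕ)
    (u : MvPolynomial (Fin r) ℂ ⧸ I) :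
    u ∈ gradedPiece I a ↔ ∃ p, p.IsHomogeneous a ∧ Ideal.Quotient.mk I p = u := by
  simp only [gradedPiece, Submodule.mem_map, mem_homogeneousSubmodule,
    AlgHom.toLinearMap_apply, Ideal.Quotient.mkₐ_eq_mk]

lemma mk_monomial_bad (d : Fin r → ℕ) (I : Ideal (MvPolynomial (Fin r) ℂ))
    (hI : I = Ideal.span (Set.range fun i => (X i : MvPolynomial (Fin r) ℂ) ^ d i))
    (α : Fin r →₀ ℕ) (c : ℂ) (h : ∃ j, d j ≤ α j) :
    Ideal.Quotient.mk I (monomial α c) = 0 := by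
  rw [Ideal.Quotient.eq_zero_iff_mem, mem_I_iff d I hI]
  intro β hβ
  rw [support_monomial] at hβ
  rcases em (c = 0) with hc | hc
  · simp [hc] at hβ
  · simp [hc] at hβ
    exact hβ ▸ h

lemma good_le (d : Fin r → ℕ) (δ : Fin r →₀ ℕ) (hδ : ∀ j, δ j = d j - 1)
    (α : Fin r →₀ ℕ) (h : ¬ ∃ j, d j ≤ α j) : α ≤ δ := by
  push_neg at h
  intro j
  rw [hδ j]
  exact Nat.le_sub_one_of_lt (h j)

lemma gradedPiece_eq_span (d : Fin r → ℕ) (I : Ideal (MvPolynomial (Fin r) ℂ))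
    (hI : I = Ideal.span (Set.range fun i => (X i : MvPolynomial (Fin r) ℂ) ^ d i))
    (δ : Fin r →₀ ℕ) (hδ : ∀ j, δ j = d j - 1) (a : ℕ) :
    gradedPiece I a = Submodule.span ℂ
      ((fun α => Ideal.Quotient.mk I (monomial α (1:ℂ))) '' {α | α ≤ δ ∧ α.degree = a}) := by
  apply le_antisymm
  · rintro u hu
    rw [mem_gradedPiece_iff] at hu
    obtain ⟨p, hp, rfl⟩ := hu
    rw [p.as_sum, map_sum]
    apply Submodule.sum_mem
    intro α hα
    rcases em (∃ j, d j ≤ α j) with hbad | hgood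
    · rw [mk_monomial_bad d I hI α _ hbad]
      exact Submodule.zero_mem _
    · have h1 : monomial α (coeff α p) = (coeff α p) • monomial α (1:ℂ) := by
        rw [smul_monomial, smul_eq_mul, mul_one]
      rw [h1, ← Ideal.Quotient.mkₐ_eq_mk ℂ, map_smul, Ideal.Quotient.mkₐ_eq_mk]
      apply Submodule.smul_mem
      apply Submodule.subset_span
      exact ⟨α, ⟨good_le d δ hδ α hgood, homog_deg hp (Finsupp.mem_support_iff.mp hα)⟩, rfl⟩
  · rw [Submodule.span_le]
    rintro u ⟨α, ⟨hle, hdeg⟩, rfl⟩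
    rw [SetLike.mem_coe, mem_gradedPiece_iff]
    exact ⟨monomial α 1, isHomogeneous_monomial 1 hdeg, rfl⟩

lemma mul_mem_gradedPiece (I : Ideal (MvPolynomial (Fin r) ℂ))
    (f : MvPolynomial (Fin r) ℂ) (k : ℕ) (hf : f.IsHomogeneous k)
    (a : ℕ) (u : MvPolynomial (Fin r) ℂ ⧸ I) (hu : u ∈ gradedPiece I a) :
    Ideal.Quotient.mk I f * u ∈ gradedPiece I (a + k) := by
  rw [mem_gradedPiece_iff] at hu ⊢
  obtain ⟨p, hp, rfl⟩ := hu
  exact ⟨f * p, by simpa [Nat.add_comm] using hf.mul hp, by rw [map_mul]⟩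

noncomputable def Phi (I : Ideal (MvPolynomial (Fin r) ℂ)) (δ : Fin r →₀ ℕ)
    (h : ∀ p ∈ I, coeff δ p = 0) : (MvPolynomial (Fin r) ℂ ⧸ I) →ₗ[ℂ] ℂ :=
  Submodule.liftQ (I.restrictScalars ℂ) (lcoeff ℂ δ) (fun p hp => h p hp)

theorem Phi_mk (I : Ideal (MvPolynomial (Fin r) ℂ)) (δ : Fin r →₀ ℕ)
    (h : ∀ p ∈ I, coeff δ p = 0) (p : MvPolynomial (Fin r) ℂ) :
    Phi I δ h (Ideal.Quotient.mk I p) = coeff δ p := rfl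

lemma coeff_delta_zero (d : Fin r → ℕ) (I : Ideal (MvPolynomial (Fin r) ℂ))
    (hI : I = Ideal.span (Set.range fun i => (X i : MvPolynomial (Fin r) ℂ) ^ d i))
    (δ : Fin r →₀ ℕ) (hδ : ∀ j, δ j = d j - 1) (hd : ∀ j, 1 ≤ d j) :
    ∀ p ∈ I, coeff δ p = 0 := by
  intro p hp
  by_contra hc
  obtain ⟨j, hj⟩ := (mem_I_iff d I hI p).mp hp δ (Finsupp.mem_support_iff.mpr hc)
  rw [hδ j] at hj
  have := hd j
  omega

lemma deg_add (x y : Fin r →₀ ℕ) : (x + y).degree = x.degree + y.degree := by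
  simp [degF, Finsupp.add_apply, Finset.sum_add_distrib]

lemma deg_sub {x y : Fin r →₀ ℕ} (h : y ≤ x) : (x - y).degree = x.degree - y.degree := by
  have h2 := deg_add (x - y) y
  rw [tsub_add_cancel_of_le h] at h2
  omega

lemma nondeg (d : Fin r → ℕ) (I : Ideal (MvPolynomial (Fin r) ℂ))
    (hI : I = Ideal.span (Set.range fun i => (X i : MvPolynomial (Fin r) ℂ) ^ d i))
    (δ : Fin r →₀ ℕ) (hδ : ∀ j, δ j = d j - 1)
    (h0 : ∀ p ∈ I, coeff δ p = 0)
    (a b : ℕ) (hab : a + b = δ.degree)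
    (u : MvPolynomial (Fin r) ℂ ⧸ I) (hu : u ∈ gradedPiece I a)
    (hz : ∀ v ∈ gradedPiece I b, Phi I δ h0 (u * v) = 0) : u = 0 := by
  rw [mem_gradedPiece_iff] at hu
  obtain ⟨p, hp, rfl⟩ := hu
  rw [Ideal.Quotient.eq_zero_iff_mem, mem_I_iff d I hI]
  intro α hα
  by_contra hgood
  have hle : α ≤ δ := good_le d δ hδ α hgood
  have hdeg : α.degree = a := homog_deg hp (Finsupp.mem_support_iff.mp hα)
  have hdegsub : (δ - α).degree = b := by
    rw [deg_sub hle, hdeg]; omega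
  have hv : Ideal.Quotient.mk I (monomial (δ - α) (1:ℂ)) ∈ gradedPiece I b :=
    (mem_gradedPiece_iff I b _).mpr ⟨_, isHomogeneous_monomial 1 hdegsub, rfl⟩
  have hz2 := hz _ hv
  rw [← map_mul, Phi_mk] at hz2
  have hδeq : α + (δ - α) = δ := add_tsub_cancel_of_le hle
  have h3 := coeff_mul_monomial α (δ - α) (1:ℂ) p
  rw [hδeq] at h3
  rw [h3, mul_one] at hz2
  exact (Finsupp.mem_support_iff.mp hα) hz2

lemma surjpair (d : Fin r → ℕ) (I : Ideal (MvPolynomial (Fin r) ℂ))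
    (hI : I = Ideal.span (Set.range fun i => (X i : MvPolynomial (Fin r) ℂ) ^ d i))
    (δ : Fin r →₀ ℕ) (hδ : ∀ j, δ j = d j - 1)
    (h0 : ∀ p ∈ I, coeff δ p = 0)
    (a b : ℕ) (hab : a + b = δ.degree)
    (g : (MvPolynomial (Fin r) ℂ ⧸ I) →ₗ[ℂ] ℂ) :
    ∃ u ∈ gradedPiece I a, ∀ v ∈ gradedPiece I b, Phi I δ h0 (u * v) = g v := by
  classical
  set S : Finset (Fin r →₀ ℕ) := (Finset.Iic δ).filter (fun α => α.degree = a) with hS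
  set c : (Fin r →₀ ℕ) → ℂ :=
    fun α => g (Ideal.Quotient.mk I (monomial (δ - α) (1:ℂ))) with hc
  set u : MvPolynomial (Fin r) ℂ ⧸ I :=
    ∑ α ∈ S, c α • Ideal.Quotient.mk I (monomial α (1:ℂ)) with hu
  have humem : u ∈ gradedPiece I a := by
    apply Submodule.sum_mem
    intro α hα
    apply Submodule.smul_mem
    rw [hS, Finset.mem_filter, Finset.mem_Iic] at hα
    exact (mem_gradedPiece_iff I a _).mpr ⟨_, isHomogeneous_monomial 1 hα.2, rfl⟩
  refine ⟨u, humem, ?_⟩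
  intro v hv
  rw [gradedPiece_eq_span d I hI δ hδ b] at hv
  induction hv using Submodule.span_induction with
  | mem x hx =>
    obtain ⟨β, ⟨hβle, hβdeg⟩, rfl⟩ := hx
    have key : u * Ideal.Quotient.mk I (monomial β (1:ℂ)) =
        ∑ α ∈ S, c α • Ideal.Quotient.mk I (monomial (α + β) (1:ℂ)) := by
      rw [hu, Finset.sum_mul]
      refine Finset.sum_congr rfl fun α _ => ?_
      rw [smul_mul_assoc, ← map_mul, monomial_mul, one_mul]
    rw [key, map_sum]
    simp only [map_smul, smul_eq_mul]
    have term : ∀ α ∈ S, c α * Phi I δ h0 (Ideal.Quotient.mk I (monomial (α + β) (1:ℂ))) =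
        if α = δ - β then c α else 0 := by
      intro α hα
      rw [Phi_mk, coeff_monomial]
      by_cases h : α + β = δ
      · have h2 : α = δ - β := by rw [← h, add_tsub_cancel_right]
        rw [if_pos h, if_pos h2, mul_one]
      · have h2 : ¬ α = δ - β := by
          intro he
          exact h (by rw [he, tsub_add_cancel_of_le hβle])
        rw [if_neg h, if_neg h2, mul_zero]
    rw [Finset.sum_congr rfl term, Finset.sum_ite_eq' S (δ - β) c]
    have hmem : δ - β ∈ S := by
      rw [hS, Finset.mem_filter, Finset.mem_Iic]
      exact ⟨tsub_le_self, by rw [deg_sub hβle, hβdeg]; omega⟩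
    rw [if_pos hmem]
    show g (Ideal.Quotient.mk I (monomial (δ - (δ - β)) (1:ℂ))) =
      g (Ideal.Quotient.mk I (monomial β (1:ℂ)))
    rw [tsub_tsub_cancel_of_le hβle]
  | zero => simp
  | add x y hx' hy' hx hy => rw [mul_add, map_add, map_add, hx, hy]
  | smul t x hx' hx => rw [mul_smul_comm, map_smul, map_smul, hx]

end CIDual

/-- For `A = ℂ[x₁,…,x_r]/⟨x₁^{d₁},…,x_r^{d_r}⟩`, `ρ = Σ(dᵢ−1)`, `f` homogeneous of
degree `k` and `i + k ≤ ρ`: the multiplication map `×f : A_i → A_{i+k}` is injective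
iff `×f : A_{ρ−i−k} → A_{ρ−i}` is surjective. -/
theorem injective_iff_surjective_dual_monomial_complete_intersection
    (r : ℕ) (hr : 1 ≤ r) (d : Fin r → ℕ) (hd : ∀ i, 1 ≤ d i)
    (I : Ideal (MvPolynomial (Fin r) ℂ))
    (hI : I = Ideal.span (Set.range fun i => (X i : MvPolynomial (Fin r) ℂ) ^ d i))
    (ρ : ℕ) (hρ : ρ = ∑ i, (d i - 1))
    (f : MvPolynomial (Fin r) ℂ) (k : ℕ) (hf : f.IsHomogeneous k)
    (i : ℕ) (hik : i + k ≤ ρ) :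
    Set.InjOn (fun x => Ideal.Quotient.mk I f * x) (gradedPiece I i) ↔
    Set.SurjOn (fun x => Ideal.Quotient.mk I f * x) (gradedPiece I (ρ - i - k))
      (gradedPiece I (ρ - i)) := by
  set δ : Fin r →₀ ℕ := Finsupp.equivFunOnFinite.symm fun j => d j - 1 with hδdef
  have hδ : ∀ j, δ j = d j - 1 := fun j => rfl
  have hρδ : δ.degree = ρ := by
    rw [CIDual.degF, hρ]
    exact Finset.sum_congr rfl fun j _ => hδ j
  have h0 := CIDual.coeff_delta_zero d I hI δ hδ hd
  constructor
  · intro hinj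
    intro w hw
    by_contra hcon
    have hwW : w ∉ Submodule.map (LinearMap.mulLeft ℂ (Ideal.Quotient.mk I f))
        (gradedPiece I (ρ - i - k)) := by
      intro hmem
      obtain ⟨v, hv, hveq⟩ := hmem
      exact hcon ⟨v, hv, hveq⟩
    obtain ⟨g, hg1, hg2⟩ := Submodule.exists_dual_map_eq_bot_of_notMem hwW inferInstance
    have hgW : ∀ v ∈ gradedPiece I (ρ - i - k), g (Ideal.Quotient.mk I f * v) = 0 := by
      intro v hv
      have hm : Ideal.Quotient.mk I f * v ∈ Submodule.map
          (LinearMap.mulLeft ℂ (Ideal.Quotient.mk I f)) (gradedPiece I (ρ - i - k)) :=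
        ⟨v, hv, rfl⟩
      have := Submodule.mem_map_of_mem (f := g) hm
      rw [hg2] at this
      simpa using this
    obtain ⟨u, hu, hueq⟩ := CIDual.surjpair d I hI δ hδ h0 i (ρ - i)
      (by rw [hρδ]; omega) g
    have hfu : Ideal.Quotient.mk I f * u ∈ gradedPiece I (i + k) :=
      CIDual.mul_mem_gradedPiece I f k hf i u hu
    have hfu0 : Ideal.Quotient.mk I f * u = 0 := by
      apply CIDual.nondeg d I hI δ hδ h0 (i + k) (ρ - i - k) (by rw [hρδ]; omega) _ hfu
      intro v hv
      have hfv : Ideal.Quotient.mk I f * v ∈ gradedPiece I (ρ - i) := by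
        have := CIDual.mul_mem_gradedPiece I f k hf (ρ - i - k) v hv
        have he : ρ - i - k + k = ρ - i := by omega
        rwa [he] at this
      have h5 : (Ideal.Quotient.mk I f * u) * v = u * (Ideal.Quotient.mk I f * v) := by ring
      rw [h5, hueq _ hfv]
      exact hgW v hv
    have hu0 : u = 0 := by
      have h0m : (0 : MvPolynomial (Fin r) ℂ ⧸ I) ∈ gradedPiece I i := Submodule.zero_mem _
      have := hinj hu h0m (by simp [hfu0])
      exact this
    have : g w = 0 := by
      rw [← hueq w hw]
      simp [hu0]
    exact hg1 this
  · intro hsurj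
    intro x hx y hy hxy
    have hxyd : x - y ∈ gradedPiece I i := Submodule.sub_mem _ hx hy
    simp only at hxy
    have hfz : Ideal.Quotient.mk I f * (x - y) = 0 := by
      rw [mul_sub, hxy, sub_self]
    have hz : x - y = 0 := by
      apply CIDual.nondeg d I hI δ hδ h0 i (ρ - i) (by rw [hρδ]; omega) _ hxyd
      intro v hv
      obtain ⟨v', hv', rfl⟩ := hsurj hv
      have h5 : (x - y) * ((fun x => Ideal.Quotient.mk I f * x) v') =
          (Ideal.Quotient.mk I f * (x - y)) * v' := by ring
      rw [h5, hfz, zero_mul, map_zero]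
    exact sub_eq_zero.mp hz
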